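/- Let N be a positive integer, σ² > 0, and 0 < ω ≤ π. Define S_N(ω) = (1/N) Σ_{ℓ=1}^N Σ_{m=1}^N σ² · min(ℓ,m) · cos(ω(ℓ−m)). Then S_N(ω) = ((2N+1)/(4N)) · (σ²/sin²(ω/2)) · (1 − (1/(2N+1)) · sin((N+1/2)ω)/sin(ω/2)). -/

import Mathlib

open Finset Real

lemma sum_cos_arith (a d : ℝ) (n : ℕ) :
    2 * Real.sin (d/2) * ∑ j ∈ range n, Real.cos (a + j*d)
      = Real.sin (a + ((n:ℝ) - 1/2)*d) - Real.sin (a - d/2) := by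
  induction n with
  | zero =>
    have : a + (((0:ℕ):ℝ) - 1/2)*d = a - d/2 := by push_cast; ring
    rw [this]; simp
  | succ n ih =>
    rw [Finset.sum_range_succ, mul_add, ih]
    have h := Real.sin_sub_sin (a + ((n:ℝ)+1 - 1/2)*d) (a + ((n:ℝ) - 1/2)*d)
    push_cast
    ring_nf
    ring_nf at h ⊢
    nlinarith [h]

lemma sum_sin_arith (a d : ℝ) (n : ℕ) :
    2 * Real.sin (d/2) * ∑ j ∈ range n, Real.sin (a + j*d)
      = Real.cos (a - d/2) - Real.cos (a + ((n:ℝ) - 1/2)*d) := by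
  induction n with
  | zero =>
    have : a + (((0:ℕ):ℝ) - 1/2)*d = a - d/2 := by push_cast; ring
    rw [this]; simp
  | succ n ih =>
    rw [Finset.sum_range_succ, mul_add, ih]
    have h := Real.cos_sub_cos (a + ((n:ℝ)+1 - 1/2)*d) (a + ((n:ℝ) - 1/2)*d)
    push_cast
    ring_nf
    ring_nf at h ⊢
    nlinarith [h]

lemma sq_sin_diff (A B : ℝ) :
    (Real.sin A - Real.sin B)^2 + (Real.cos B - Real.cos A)^2 = 2 - 2*Real.cos (A - B) := by
  rw [Real.cos_sub]
  nlinarith [Real.sin_sq_add_cos_sq A, Real.sin_sq_add_cos_sq B]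

-- modulus of geometric trig sum over Icc k N
lemma icc_trig_sq (ω : ℝ) (N k : ℕ) (hk : 1 ≤ k) (hkN : k ≤ N) :
    4 * Real.sin (ω/2)^2 *
      ((∑ ℓ ∈ Icc k N, Real.cos (ω*ℓ))^2 + (∑ ℓ ∈ Icc k N, Real.sin (ω*ℓ))^2)
      = 2 - 2*Real.cos (((N + 1 - k : ℕ) : ℝ) * ω) := by
  have hrw : ∀ f : ℝ → ℝ, ∑ ℓ ∈ Icc k N, f (ω*ℓ) = ∑ j ∈ range (N+1-k), f (ω*k + j*ω) := by
    intro f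
    rw [← Finset.Ico_add_one_right_eq_Icc, Finset.sum_Ico_eq_sum_range]
    exact Finset.sum_congr rfl fun i _ => by push_cast; ring_nf
  have hC := sum_cos_arith (ω*k) ω (N+1-k)
  have hS := sum_sin_arith (ω*k) ω (N+1-k)
  rw [← hrw Real.cos] at hC
  rw [← hrw Real.sin] at hS
  set A := ω*k + (((N+1-k:ℕ):ℝ) - 1/2)*ω with hA
  set B := ω*k - ω/2 with hB
  have hAB : A - B = ((N + 1 - k : ℕ) : ℝ) * ω := by rw [hA, hB]; ring
  have h := sq_sin_diff A B
  rw [hAB] at h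
  set C := ∑ ℓ ∈ Icc k N, Real.cos (ω*ℓ)
  set S := ∑ ℓ ∈ Icc k N, Real.sin (ω*ℓ)
  calc 4 * Real.sin (ω/2)^2 * (C^2 + S^2)
      = (2*Real.sin (ω/2)*C)^2 + (2*Real.sin (ω/2)*S)^2 := by ring
    _ = (Real.sin A - Real.sin B)^2 + (Real.cos B - Real.cos A)^2 := by rw [hC, hS]
    _ = 2 - 2*Real.cos (((N + 1 - k : ℕ) : ℝ) * ω) := h

lemma filter_le_Icc (N k : ℕ) (hk : 1 ≤ k) :
    (Icc 1 N).filter (fun ℓ => k ≤ ℓ) = Icc k N := by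
  ext x; simp only [mem_filter, mem_Icc]; omega

lemma double_sum_min (N : ℕ) (g : ℕ → ℕ → ℝ) :
    ∑ ℓ ∈ Icc 1 N, ∑ m ∈ Icc 1 N, ((min ℓ m : ℕ):ℝ) * g ℓ m
      = ∑ k ∈ Icc 1 N, ∑ ℓ ∈ Icc k N, ∑ m ∈ Icc k N, g ℓ m := by
  have hmin : ∀ ℓ ∈ Icc 1 N, ∀ m ∈ Icc 1 N,
      ((min ℓ m : ℕ):ℝ) = ∑ k ∈ Icc 1 N, if k ≤ ℓ ∧ k ≤ m then (1:ℝ) else 0 := by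
    intro ℓ hℓ m hm
    simp only [mem_Icc] at hℓ hm
    rw [Finset.sum_boole]
    have : (Icc 1 N).filter (fun k => k ≤ ℓ ∧ k ≤ m) = Icc 1 (min ℓ m) := by
      ext x; simp only [mem_filter, mem_Icc, le_min_iff]; omega
    rw [this, Nat.card_Icc]
    norm_num
  calc ∑ ℓ ∈ Icc 1 N, ∑ m ∈ Icc 1 N, ((min ℓ m : ℕ):ℝ) * g ℓ m
      = ∑ ℓ ∈ Icc 1 N, ∑ m ∈ Icc 1 N, ∑ k ∈ Icc 1 N,
          (if k ≤ ℓ ∧ k ≤ m then g ℓ m else 0) := by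
        refine Finset.sum_congr rfl fun ℓ hℓ => Finset.sum_congr rfl fun m hm => ?_
        rw [hmin ℓ hℓ m hm, Finset.sum_mul]
        exact Finset.sum_congr rfl fun k _ => by split <;> simp
    _ = ∑ k ∈ Icc 1 N, ∑ ℓ ∈ Icc 1 N, ∑ m ∈ Icc 1 N,
          (if k ≤ ℓ ∧ k ≤ m then g ℓ m else 0) := by
        rw [show (∑ ℓ ∈ Icc 1 N, ∑ m ∈ Icc 1 N, ∑ k ∈ Icc 1 N,
            (if k ≤ ℓ ∧ k ≤ m then g ℓ m else 0))
          = ∑ ℓ ∈ Icc 1 N, ∑ k ∈ Icc 1 N, ∑ m ∈ Icc 1 N,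
            (if k ≤ ℓ ∧ k ≤ m then g ℓ m else 0) from
          Finset.sum_congr rfl fun ℓ _ => Finset.sum_comm]
        exact Finset.sum_comm
    _ = ∑ k ∈ Icc 1 N, ∑ ℓ ∈ Icc k N, ∑ m ∈ Icc k N, g ℓ m := by
        refine Finset.sum_congr rfl fun k hk => ?_
        simp only [mem_Icc] at hk
        have h1 : ∀ ℓ, ∑ m ∈ Icc 1 N, (if k ≤ ℓ ∧ k ≤ m then g ℓ m else 0)
            = if k ≤ ℓ then ∑ m ∈ Icc k N, g ℓ m else 0 := by
          intro ℓ
          by_cases h : k ≤ ℓ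
          · simp only [h, true_and, if_true]
            rw [← filter_le_Icc N k hk.1, Finset.sum_filter]
          · simp [h]
        simp only [h1]
        rw [← filter_le_Icc N k hk.1, Finset.sum_filter]

/-- Closed-form evaluation of the power spectrum for sequences with
uncorrelated unit-mean level spacings of variance `σ²`. -/
theorem power_spectrum_uncorrelated_closed_form
    (N : ℕ) (hN : 1 ≤ N) (σ2 : ℝ) (hσ2 : 0 < σ2)
    (ω : ℝ) (hω0 : 0 < ω) (hωπ : ω ≤ π) :
    (1 / N) * ∑ ℓ ∈ Icc 1 N, ∑ m ∈ Icc 1 N,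
        σ2 * ((min ℓ m : ℕ) : ℝ) * Real.cos (ω * ((ℓ : ℝ) - (m : ℝ))) =
      ((2 * N + 1) / (4 * N)) * (σ2 / Real.sin (ω / 2) ^ 2) *
        (1 - (1 / (2 * N + 1)) * (Real.sin ((N + 1 / 2) * ω) / Real.sin (ω / 2))) := by
  have hN0 : (0:ℝ) < N := by exact_mod_cast hN
  have hs : 0 < Real.sin (ω/2) :=
    Real.sin_pos_of_pos_of_lt_pi (by linarith) (by linarith [Real.pi_pos])
  set s := Real.sin (ω/2) with hs_def
  -- Step A: reduce to sum of squared Dirichlet kernels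
  have stepA : ∑ ℓ ∈ Icc 1 N, ∑ m ∈ Icc 1 N,
        σ2 * ((min ℓ m : ℕ) : ℝ) * Real.cos (ω * ((ℓ : ℝ) - (m : ℝ)))
      = σ2 * ∑ k ∈ Icc 1 N,
          ((∑ ℓ ∈ Icc k N, Real.cos (ω*ℓ))^2 + (∑ ℓ ∈ Icc k N, Real.sin (ω*ℓ))^2) := by
    have sq_split : ∀ t : Finset ℕ,
        ∑ ℓ ∈ t, ∑ m ∈ t, (Real.cos (ω*ℓ) * Real.cos (ω*m) + Real.sin (ω*ℓ) * Real.sin (ω*m))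
          = (∑ ℓ ∈ t, Real.cos (ω*ℓ))^2 + (∑ ℓ ∈ t, Real.sin (ω*ℓ))^2 := by
      intro t
      simp only [Finset.sum_add_distrib, ← Finset.mul_sum, ← Finset.sum_mul]
      ring
    calc ∑ ℓ ∈ Icc 1 N, ∑ m ∈ Icc 1 N,
          σ2 * ((min ℓ m : ℕ) : ℝ) * Real.cos (ω * ((ℓ : ℝ) - (m : ℝ)))
        = σ2 * ∑ ℓ ∈ Icc 1 N, ∑ m ∈ Icc 1 N, ((min ℓ m : ℕ) : ℝ) *
            (Real.cos (ω*ℓ) * Real.cos (ω*m) + Real.sin (ω*ℓ) * Real.sin (ω*m)) := by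
          rw [Finset.mul_sum]
          refine Finset.sum_congr rfl fun ℓ _ => ?_
          rw [Finset.mul_sum]
          refine Finset.sum_congr rfl fun m _ => ?_
          rw [show ω * ((ℓ : ℝ) - (m : ℝ)) = ω*ℓ - ω*m by ring, Real.cos_sub]
          ring
      _ = σ2 * ∑ k ∈ Icc 1 N,
          ((∑ ℓ ∈ Icc k N, Real.cos (ω*ℓ))^2 + (∑ ℓ ∈ Icc k N, Real.sin (ω*ℓ))^2) := by
          rw [double_sum_min N (fun ℓ m =>
            Real.cos (ω*ℓ) * Real.cos (ω*m) + Real.sin (ω*ℓ) * Real.sin (ω*m))]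
          exact congrArg _ (Finset.sum_congr rfl fun k _ => sq_split (Icc k N))
  -- Step B
  have stepB : ∑ k ∈ Icc 1 N,
        ((∑ ℓ ∈ Icc k N, Real.cos (ω*ℓ))^2 + (∑ ℓ ∈ Icc k N, Real.sin (ω*ℓ))^2)
      = ∑ k ∈ Icc 1 N, (1 - Real.cos (((N + 1 - k : ℕ) : ℝ) * ω)) / (2 * s^2) := by
    refine Finset.sum_congr rfl fun k hk => ?_
    simp only [mem_Icc] at hk
    have h := icc_trig_sq ω N k hk.1 hk.2
    have hs2 : s^2 ≠ 0 := pow_ne_zero _ hs.ne'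
    field_simp
    have h' : Real.cos (((N + 1 - k : ℕ) : ℝ) * ω) = Real.cos (ω * ((N + 1 - k : ℕ) : ℝ)) := by
      rw [mul_comm]
    rw [← hs_def] at h
    linarith [h, h']
  -- Step C
  have stepC : ∑ k ∈ Icc 1 N, Real.cos (((N + 1 - k : ℕ) : ℝ) * ω)
      = ∑ j ∈ range N, Real.cos (ω + j*ω) := by
    rw [← Finset.Ico_add_one_right_eq_Icc, Finset.sum_Ico_eq_sum_range]
    have hrefl := Finset.sum_range_reflect (fun j => Real.cos (((j+1 : ℕ) : ℝ) * ω)) N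
    calc ∑ i ∈ range (N + 1 - 1), Real.cos (((N + 1 - (1 + i) : ℕ) : ℝ) * ω)
        = ∑ i ∈ range N, Real.cos (((N - 1 - i + 1 : ℕ) : ℝ) * ω) := by
          rw [Nat.add_sub_cancel]
          refine Finset.sum_congr rfl fun i hi => ?_
          simp only [mem_range] at hi
          have h' : (N + 1 - (1 + i)) = (N - 1 - i + 1) := by omega
          rw [h']
      _ = ∑ j ∈ range N, Real.cos (((j + 1 : ℕ) : ℝ) * ω) := hrefl
      _ = ∑ j ∈ range N, Real.cos (ω + j*ω) := by
          refine Finset.sum_congr rfl fun j _ => ?_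
          congr 1
          push_cast
          ring
  -- Step D
  have stepD : 2 * s * ∑ j ∈ range N, Real.cos (ω + j*ω)
      = Real.sin (((N:ℝ) + 1/2) * ω) - s := by
    have h := sum_cos_arith ω ω N
    rw [show ω + ((N:ℝ) - 1/2)*ω = ((N:ℝ) + 1/2)*ω by ring,
        show ω - ω/2 = ω/2 by ring] at h
    exact h
  -- Assemble
  rw [stepA, stepB]
  have hsum : ∑ k ∈ Icc 1 N, (1 - Real.cos (((N + 1 - k : ℕ) : ℝ) * ω)) / (2 * s^2)
      = ((N:ℝ) - ∑ j ∈ range N, Real.cos (ω + j*ω)) / (2 * s^2) := by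
    rw [← Finset.sum_div, Finset.sum_sub_distrib, Finset.sum_const, Nat.card_Icc, stepC]
    simp
  rw [hsum]
  set Q := ∑ j ∈ range N, Real.cos (ω + j*ω) with hQ_def
  have hQ : Q = (Real.sin (((N:ℝ) + 1/2) * ω) - s) / (2 * s) := by
    rw [eq_div_iff (by positivity)]
    linarith [stepD]
  rw [hQ]
  have h2N1 : (2 * (N:ℝ) + 1) ≠ 0 := by positivity
  field_simp
  ring
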